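/- For any finite poset P with at least 2 elements and any x ∈ P, dim(P) ≤ 1 + dim(P − {x}). -/

import Mathlib

/-- `x` and `y` are incomparable elements of a poset. -/
def Incomp {α : Type*} [PartialOrder α] (x y : α) : Prop := ¬ x ≤ y ∧ ¬ y ≤ x

/-- `r` is a linear extension of the partial order on `α`. -/
def IsLinearExtension {α : Type*} [PartialOrder α] (r : α → α → Prop) : Prop :=
  IsLinearOrder α r ∧ ∀ x y : α, x ≤ y → r x y

/-- `α` admits a realizer consisting of `d` linear extensions. -/
def RealizerOfSize (α : Type*) [PartialOrder α] (d : ℕ) : Prop :=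
  ∃ L : Fin d → (α → α → Prop), (∀ i, IsLinearExtension (L i)) ∧
    ∀ x y : α, x ≤ y ↔ ∀ i, L i x y

/-- The Dushnik–Miller dimension: the least positive integer `d`
for which the order is the intersection of `d` linear extensions. -/
noncomputable def dimP (α : Type*) [PartialOrder α] : ℕ :=
  sInf {d | 0 < d ∧ RealizerOfSize α d}

section Aux

variable {α : Type*} [PartialOrder α]

theorem exists_le_ext (α : Type*) [PartialOrder α] :
    ∃ r : α → α → Prop, IsLinearExtension r := by
  obtain ⟨s, hs, hle⟩ := extend_partialOrder (α := α) (· ≤ ·)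
  exact ⟨s, hs, fun a b h => hle a b h⟩

theorem exists_rev_ext {a b : α} (h : Incomp a b) :
    ∃ r : α → α → Prop, IsLinearExtension r ∧ r b a := by
  classical
  set r' : α → α → Prop := fun c d => c ≤ d ∨ (c ≤ b ∧ a ≤ d) with hr'
  haveI : IsPartialOrder α r' :=
    { refl := fun c => Or.inl le_rfl
      trans := by
        intro c d e hcd hde
        rcases hcd with hcd | ⟨hcb, had⟩
        · rcases hde with hde | ⟨hdb, hae⟩
          · exact Or.inl (hcd.trans hde)
          · exact Or.inr ⟨hcd.trans hdb, hae⟩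
        · rcases hde with hde | ⟨hdb, hae⟩
          · exact Or.inr ⟨hcb, had.trans hde⟩
          · exact absurd (had.trans hdb) h.1
      antisymm := by
        intro c d hcd hdc
        rcases hcd with hcd | ⟨hcb, had⟩
        · rcases hdc with hdc | ⟨hdb, hac⟩
          · exact hcd.antisymm hdc
          · exact absurd ((hac.trans hcd).trans hdb) h.1
        · rcases hdc with hdc | ⟨hdb, hac⟩
          · exact absurd ((had.trans hdc).trans hcb) h.1
          · exact absurd (had.trans hdb) h.1 }
  obtain ⟨s, hs, hle⟩ := extend_partialOrder r'
  refine ⟨s, ⟨hs, fun c d hcd => hle c d (Or.inl hcd)⟩, hle b a (Or.inr ⟨le_refl b, le_refl a⟩)⟩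

theorem incomp_ne {a b : α} (h : Incomp a b) : a ≠ b := fun he => h.1 (he ▸ le_refl a)

theorem exists_realizer (α : Type*) [PartialOrder α] [Finite α] :
    ∃ d, 0 < d ∧ RealizerOfSize α d := by
  classical
  haveI := Fintype.ofFinite α
  set s : Finset (α × α) := Finset.univ.filter (fun p => Incomp p.1 p.2) with hs
  have hrev : ∀ p : {p : α × α // p ∈ s}, ∃ r : α → α → Prop,
      IsLinearExtension r ∧ r p.1.2 p.1.1 := by
    rintro ⟨p, hp⟩
    rw [hs, Finset.mem_filter] at hp
    exact exists_rev_ext hp.2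
  choose f hf1 hf2 using hrev
  obtain ⟨r₀, hr₀⟩ := exists_le_ext α
  refine ⟨s.card + 1, Nat.succ_pos _, ?_⟩
  refine ⟨fun i => if h : (i : ℕ) < s.card then f (s.equivFin.symm ⟨i, h⟩) else r₀, ?_, ?_⟩
  · intro i
    by_cases h : (i : ℕ) < s.card
    · simp only [dif_pos h]; exact hf1 _
    · simp only [dif_neg h]; exact hr₀
  · intro a b
    constructor
    · intro hab i
      by_cases h : (i : ℕ) < s.card
      · simp only [dif_pos h]; exact (hf1 _).2 a b hab
      · simp only [dif_neg h]; exact hr₀.2 a b hab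
    · intro hall
      by_contra hab
      by_cases hba : b ≤ a
      · have hne : a ≠ b := fun he => hab (he ▸ le_refl a)
        have h1 := hall ⟨s.card, Nat.lt_succ_self _⟩
        simp only [dif_neg (lt_irrefl s.card)] at h1
        have h2 := hr₀.2 b a hba
        haveI := hr₀.1.toIsPartialOrder.toAntisymm
        exact hne (antisymm_of r₀ h1 h2)
      · have hinc : Incomp a b := ⟨hab, hba⟩
        have hps : (a, b) ∈ s := by
          rw [hs, Finset.mem_filter]
          exact ⟨Finset.mem_univ _, hinc⟩
        set i0 : Fin s.card := s.equivFin ⟨(a, b), hps⟩ with hi0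
        have hlt : (i0 : ℕ) < s.card := i0.2
        have h1 := hall ⟨(i0 : ℕ), Nat.lt_succ_of_lt hlt⟩
        simp only [dif_pos hlt] at h1
        simp only [Fin.eta, hi0, Equiv.symm_apply_apply] at h1
        have h2 := hf2 ⟨(a, b), hps⟩
        haveI := (hf1 ⟨(a, b), hps⟩).1.toIsPartialOrder.toAntisymm
        exact incomp_ne hinc (antisymm_of _ h1 h2)

end Aux


section Main

variable {α : Type*} [PartialOrder α]

open Classical in
/-- Insert `x` into a linear order `ℓ` on `{x}ᶜ` at the cut determined by the set `T`
(elements of `T` go below `x`, the rest above). -/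
noncomputable def insRel (x : α) (ℓ : ↥({x}ᶜ : Set α) → ↥({x}ᶜ : Set α) → Prop)
    (T : Set ↥({x}ᶜ : Set α)) : α → α → Prop := fun y z =>
  if hy : y = x then
    (if z = x then True else ∀ hz : ¬ z = x, (⟨z, hz⟩ : ↥({x}ᶜ : Set α)) ∉ T)
  else
    (if z = x then (⟨y, hy⟩ : ↥({x}ᶜ : Set α)) ∈ T
     else ∀ hz : ¬ z = x, ℓ ⟨y, hy⟩ ⟨z, hz⟩)

variable {x : α} {ℓ : ↥({x}ᶜ : Set α) → ↥({x}ᶜ : Set α) → Prop} {T : Set ↥({x}ᶜ : Set α)}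

theorem insRel_xx : insRel x ℓ T x x := by simp [insRel]

theorem insRel_right_x {y : α} (hy : ¬ y = x) :
    insRel x ℓ T y x ↔ (⟨y, hy⟩ : ↥({x}ᶜ : Set α)) ∈ T := by
  simp [insRel, hy]

theorem insRel_left_x {z : α} (hz : ¬ z = x) :
    insRel x ℓ T x z ↔ (⟨z, hz⟩ : ↥({x}ᶜ : Set α)) ∉ T := by
  simp [insRel, hz]

theorem insRel_ne {y z : α} (hy : ¬ y = x) (hz : ¬ z = x) :
    insRel x ℓ T y z ↔ ℓ ⟨y, hy⟩ ⟨z, hz⟩ := by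
  simp [insRel, hy, hz]

theorem insRel_ext
    (hℓ : IsLinearOrder _ ℓ)
    (hext : ∀ A B : ↥({x}ᶜ : Set α), (A : α) ≤ (B : α) → ℓ A B)
    (hdown : ∀ A B, ℓ A B → B ∈ T → A ∈ T)
    (hV : ∀ A : ↥({x}ᶜ : Set α), (A : α) < x → A ∈ T)
    (hU : ∀ A : ↥({x}ᶜ : Set α), x < (A : α) → A ∉ T) :
    IsLinearExtension (insRel x ℓ T) := by
  classical
  haveI := hℓ.toIsPartialOrder.toAntisymm
  haveI := hℓ.toIsPartialOrder.toIsPreorder.toIsTrans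
  haveI := hℓ.toIsPartialOrder.toIsPreorder.toRefl
  haveI := hℓ.toTotal
  have hrefl : ∀ y, insRel x ℓ T y y := by
    intro y
    by_cases hy : y = x
    · subst hy; exact insRel_xx
    · exact (insRel_ne hy hy).mpr (refl_of ℓ _)
  have htrans : ∀ y z w, insRel x ℓ T y z → insRel x ℓ T z w → insRel x ℓ T y w := by
    intro y z w hyz hzw
    by_cases hy : y = x <;> by_cases hz : z = x <;> by_cases hw : w = x
    · subst hy; subst hw; exact insRel_xx
    · subst hy; subst hz; exact hzw
    · subst hy; subst hw; exact insRel_xx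
    · subst hy
      rw [insRel_left_x hz] at hyz
      rw [insRel_ne hz hw] at hzw
      rw [insRel_left_x hw]
      exact fun hmem => hyz (hdown _ _ hzw hmem)
    · subst hz; subst hw
      exact hyz
    · subst hz
      rw [insRel_right_x hy] at hyz
      rw [insRel_left_x hw] at hzw
      rw [insRel_ne hy hw]
      rcases total_of ℓ ⟨y, hy⟩ ⟨w, hw⟩ with h | h
      · exact h
      · exact absurd (hdown _ _ h hyz) hzw
    · subst hw
      rw [insRel_ne hy hz] at hyz
      rw [insRel_right_x hz] at hzw
      rw [insRel_right_x hy]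
      exact hdown _ _ hyz hzw
    · rw [insRel_ne hy hz] at hyz
      rw [insRel_ne hz hw] at hzw
      rw [insRel_ne hy hw]
      exact trans_of ℓ hyz hzw
  have hanti : ∀ y z, insRel x ℓ T y z → insRel x ℓ T z y → y = z := by
    intro y z hyz hzy
    by_cases hy : y = x <;> by_cases hz : z = x
    · rw [hy, hz]
    · subst hy
      rw [insRel_left_x hz] at hyz
      rw [insRel_right_x hz] at hzy
      exact absurd hzy hyz
    · subst hz
      rw [insRel_right_x hy] at hyz
      rw [insRel_left_x hy] at hzy
      exact absurd hyz hzy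
    · rw [insRel_ne hy hz] at hyz
      rw [insRel_ne hz hy] at hzy
      exact congrArg Subtype.val (antisymm_of ℓ hyz hzy)
  have htot : ∀ y z, insRel x ℓ T y z ∨ insRel x ℓ T z y := by
    intro y z
    by_cases hy : y = x <;> by_cases hz : z = x
    · subst hy; subst hz; exact Or.inl insRel_xx
    · rw [hy]
      by_cases hm : (⟨z, hz⟩ : ↥({x}ᶜ : Set α)) ∈ T
      · exact Or.inr ((insRel_right_x hz).mpr hm)
      · exact Or.inl ((insRel_left_x hz).mpr hm)
    · rw [hz]
      by_cases hm : (⟨y, hy⟩ : ↥({x}ᶜ : Set α)) ∈ T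
      · exact Or.inl ((insRel_right_x hy).mpr hm)
      · exact Or.inr ((insRel_left_x hy).mpr hm)
    · rcases total_of ℓ ⟨y, hy⟩ ⟨z, hz⟩ with h | h
      · exact Or.inl ((insRel_ne hy hz).mpr h)
      · exact Or.inr ((insRel_ne hz hy).mpr h)
  have hext' : ∀ a b : α, a ≤ b → insRel x ℓ T a b := by
    intro a b hab
    by_cases ha : a = x <;> by_cases hb : b = x
    · rw [ha, hb]; exact insRel_xx
    · subst ha
      rw [insRel_left_x hb]
      exact hU _ (lt_of_le_of_ne hab (fun h => hb h.symm))
    · subst hb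
      rw [insRel_right_x ha]
      exact hV _ (lt_of_le_of_ne hab ha)
    · rw [insRel_ne ha hb]
      exact hext _ _ hab
  exact ⟨{ refl := hrefl, trans := htrans, antisymm := hanti, total := htot }, hext'⟩

end Main

section Step

variable {α : Type*} [PartialOrder α]

/-- Reorder a linear order so that the set `S` forms an initial segment. -/
def reorder {γ : Type*} (ℓ : γ → γ → Prop) (S : Set γ) : γ → γ → Prop :=
  fun A B => (A ∈ S ∧ B ∉ S) ∨ ((A ∈ S ↔ B ∈ S) ∧ ℓ A B)

theorem reorder_lin {γ : Type*} {ℓ : γ → γ → Prop} {S : Set γ}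
    (hℓ : IsLinearOrder γ ℓ) : IsLinearOrder γ (reorder ℓ S) := by
  haveI := hℓ.toIsPartialOrder.toAntisymm
  haveI := hℓ.toIsPartialOrder.toIsPreorder.toIsTrans
  haveI := hℓ.toIsPartialOrder.toIsPreorder.toRefl
  haveI := hℓ.toTotal
  refine { refl := ?_, trans := ?_, antisymm := ?_, total := ?_ }
  · intro A; exact Or.inr ⟨Iff.rfl, refl_of ℓ A⟩
  · rintro A B C (⟨hA, hB⟩ | ⟨hAB, hℓAB⟩) (⟨hB', hC⟩ | ⟨hBC, hℓBC⟩)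
    · exact absurd hB' hB
    · exact Or.inl ⟨hA, fun hC => hB (hBC.mpr hC)⟩
    · exact Or.inl ⟨hAB.mpr hB', hC⟩
    · exact Or.inr ⟨hAB.trans hBC, trans_of ℓ hℓAB hℓBC⟩
  · rintro A B (⟨hA, hB⟩ | ⟨hAB, hℓAB⟩) (⟨hB', hA'⟩ | ⟨hBA, hℓBA⟩)
    · exact absurd hB' hB
    · exact absurd (hBA.mpr hA) hB
    · exact absurd (hAB.mpr hB') hA'
    · exact antisymm_of ℓ hℓAB hℓBA
  · intro A B
    by_cases hA : A ∈ S <;> by_cases hB : B ∈ S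
    · rcases total_of ℓ A B with h | h
      · exact Or.inl (Or.inr ⟨iff_of_true hA hB, h⟩)
      · exact Or.inr (Or.inr ⟨iff_of_true hB hA, h⟩)
    · exact Or.inl (Or.inl ⟨hA, hB⟩)
    · exact Or.inr (Or.inl ⟨hB, hA⟩)
    · rcases total_of ℓ A B with h | h
      · exact Or.inl (Or.inr ⟨iff_of_false hA hB, h⟩)
      · exact Or.inr (Or.inr ⟨iff_of_false hB hA, h⟩)

theorem reorder_ext {γ : Type*} [PartialOrder γ] {ℓ : γ → γ → Prop} {S : Set γ}
    (hext : ∀ A B : γ, A ≤ B → ℓ A B)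
    (hS : ∀ A B : γ, A ≤ B → B ∈ S → A ∈ S) :
    ∀ A B : γ, A ≤ B → reorder ℓ S A B := by
  intro A B hAB
  by_cases hB : B ∈ S
  · exact Or.inr ⟨iff_of_true (hS A B hAB hB) hB, hext A B hAB⟩
  · by_cases hA : A ∈ S
    · exact Or.inl ⟨hA, hB⟩
    · exact Or.inr ⟨iff_of_false hA hB, hext A B hAB⟩

theorem reorder_down {γ : Type*} {ℓ : γ → γ → Prop} {S : Set γ} {A B : γ}
    (h : reorder ℓ S A B) (hB : B ∈ S) : A ∈ S := by
  rcases h with ⟨hA, _⟩ | ⟨hAB, _⟩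
  · exact hA
  · exact hAB.mpr hB

theorem realizer_step (x : α) {t : ℕ} (ht : 0 < t)
    (h : RealizerOfSize ↥({x}ᶜ : Set α) t) : RealizerOfSize α (1 + t) := by
  classical
  rw [Nat.add_comm]
  obtain ⟨L, hL1, hL2⟩ := h
  have hsub : ∀ A B : ↥({x}ᶜ : Set α), (A : α) ≤ (B : α) ↔ A ≤ B := fun A B => Iff.rfl
  set j₀ : Fin t := ⟨0, ht⟩ with hj₀
  -- W : elements not above x ; V : elements below x
  set W : Set ↥({x}ᶜ : Set α) := {A | ¬ x < (A : α)} with hW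
  set V : Set ↥({x}ᶜ : Set α) := {A | (A : α) < x} with hVdef
  have hxne : ∀ A : ↥({x}ᶜ : Set α), (A : α) ≠ x := fun A => A.2
  have hWdown : ∀ A B : ↥({x}ᶜ : Set α), A ≤ B → B ∈ W → A ∈ W := by
    intro A B hAB hB hxA
    exact hB (lt_of_lt_of_le hxA hAB)
  have hVdown : ∀ A B : ↥({x}ᶜ : Set α), A ≤ B → B ∈ V → A ∈ V := by
    intro A B hAB hB
    exact lt_of_le_of_lt hAB hB
  set L0 := L j₀ with hL0
  have hL0lin := (hL1 j₀).1
  have hL0ext : ∀ A B : ↥({x}ᶜ : Set α), (A : α) ≤ (B : α) → L0 A B :=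
    fun A B hab => (hL1 j₀).2 A B hab
  -- the three kinds of linear extensions of α
  set M0 : α → α → Prop := insRel x (reorder L0 W) W with hM0
  set M1 : α → α → Prop := insRel x (reorder L0 V) V with hM1
  set MD : Fin t → (α → α → Prop) :=
    fun j => insRel x (L j) {A | ∃ B : ↥({x}ᶜ : Set α), (B : α) < x ∧ L j A B} with hMD
  have hM0ext : IsLinearExtension M0 := by
    refine insRel_ext (reorder_lin hL0lin) ?_ ?_ ?_ ?_
    · exact fun A B hAB => reorder_ext (fun A B h => hL0ext A B h) hWdown A B hAB
    · exact fun A B h hB => reorder_down h hB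
    · intro A hA
      exact fun hxA => absurd (hA.trans hxA) (lt_irrefl _)
    · intro A hA hmem
      exact hmem hA
  have hM1ext : IsLinearExtension M1 := by
    refine insRel_ext (reorder_lin hL0lin) ?_ ?_ ?_ ?_
    · exact fun A B hAB => reorder_ext (fun A B h => hL0ext A B h) hVdown A B hAB
    · exact fun A B h hB => reorder_down h hB
    · intro A hA; exact hA
    · intro A hA hmem
      exact absurd (hmem.trans hA) (lt_irrefl _)
  have hMDext : ∀ j, IsLinearExtension (MD j) := by
    intro j
    haveI := (hL1 j).1.toIsPartialOrder.toAntisymm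
    haveI := (hL1 j).1.toIsPartialOrder.toIsPreorder.toIsTrans
    haveI := (hL1 j).1.toIsPartialOrder.toIsPreorder.toRefl
    refine insRel_ext (hL1 j).1 (fun A B hAB => (hL1 j).2 A B hAB) ?_ ?_ ?_
    · rintro A B hAB ⟨C, hC, hBC⟩
      exact ⟨C, hC, trans_of (L j) hAB hBC⟩
    · intro A hA
      exact ⟨A, hA, refl_of (L j) A⟩
    · rintro A hA ⟨C, hC, hAC⟩
      have hCA : L j C A := (hL1 j).2 C A (le_of_lt (hC.trans hA))
      have : A = C := antisymm_of (L j) hAC hCA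
      rw [this] at hA
      exact absurd (hC.trans hA) (lt_irrefl _)
  -- assemble the family
  set M : Fin (t + 1) → (α → α → Prop) :=
    fun i => Fin.cases M0 (fun j => if (j : ℕ) = 0 then M1 else MD j) i with hM
  refine ⟨M, ?_, ?_⟩
  · intro i
    refine Fin.cases ?_ ?_ i
    · simpa only [hM, Fin.cases_zero] using hM0ext
    · intro j
      by_cases hj : (j : ℕ) = 0
      · simpa only [hM, Fin.cases_succ, if_pos hj] using hM1ext
      · simpa only [hM, Fin.cases_succ, if_neg hj] using hMDext j
  · intro a b
    constructor
    · intro hab i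
      refine Fin.cases ?_ ?_ i
      · simpa only [hM, Fin.cases_zero] using hM0ext.2 a b hab
      · intro j
        by_cases hj : (j : ℕ) = 0
        · simpa only [hM, Fin.cases_succ, if_pos hj] using hM1ext.2 a b hab
        · simpa only [hM, Fin.cases_succ, if_neg hj] using (hMDext j).2 a b hab
    · intro hall
      have hall0 : M0 a b := by
        simpa only [hM, Fin.cases_zero] using hall 0
      have hall1 : M1 a b := by
        have := hall j₀.succ
        simp only [hM, Fin.cases_succ, hj₀] at this
        simpa using this
      have hallD : ∀ j : Fin t, (j : ℕ) ≠ 0 → MD j a b := by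
        intro j hj
        have := hall j.succ
        simpa only [hM, Fin.cases_succ, if_neg hj] using this
      by_contra hnab
      by_cases ha : a = x <;> by_cases hb : b = x
      · exact hnab (ha ▸ hb ▸ le_refl x)
      · -- a = x : M0 x b gives b ∉ W, i.e. x < b
        rw [hM0, ha] at hall0
        rw [insRel_left_x hb] at hall0
        have hxb : x < b := not_not.mp hall0
        exact hnab (by rw [ha]; exact hxb.le)
      · -- b = x : M1 a x gives a ∈ V, i.e. a < x
        rw [hM1, hb] at hall1
        rw [insRel_right_x ha] at hall1
        exact hnab (by rw [hb]; exact hall1.le)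
      · -- both ≠ x
        set A : ↥({x}ᶜ : Set α) := ⟨a, ha⟩ with hA
        set B : ↥({x}ᶜ : Set α) := ⟨b, hb⟩ with hB
        have hAB : ¬ A ≤ B := hnab
        have hABne : A ≠ B := by
          intro h
          exact hnab (le_of_eq (congrArg Subtype.val h))
        obtain ⟨i, hi⟩ : ∃ i, ¬ L i A B := by
          by_contra hc
          push_neg at hc
          exact hAB ((hL2 A B).mpr hc)
        haveI := (hL1 i).1.toIsPartialOrder.toAntisymm
        haveI := (hL1 i).1.toTotal
        have hiBA : L i B A := (total_of (L i) A B).resolve_left hi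
        by_cases hi0 : (i : ℕ) = 0
        · have hieq : i = j₀ := Fin.ext hi0
          rw [hieq] at hiBA
          -- claim : reorder L0 W B A  ∨  reorder L0 V B A
          have hclaim : reorder L0 W B A ∨ reorder L0 V B A := by
            by_cases hAW : A ∈ W <;> by_cases hBW : B ∈ W
            · exact Or.inl (Or.inr ⟨iff_of_true hBW hAW, hiBA⟩)
            · -- A ∈ W, B ∉ W : x < b, use V
              have hxb : x < (B : α) := not_not.mp hBW
              have hAV : A ∉ V := by
                intro hAV
                exact hAB ((hAV.trans hxb).le)
              have hBV : B ∉ V := by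
                intro hBV
                exact absurd (hxb.trans hBV) (lt_irrefl x)
              exact Or.inr (Or.inr ⟨iff_of_false hBV hAV, hiBA⟩)
            · exact Or.inl (Or.inl ⟨hBW, hAW⟩)
            · exact Or.inl (Or.inr ⟨iff_of_false hBW hAW, hiBA⟩)
          haveI := (reorder_lin (S := W) hL0lin).toIsPartialOrder.toAntisymm
          haveI := (reorder_lin (S := V) hL0lin).toIsPartialOrder.toAntisymm
          rcases hclaim with hcl | hcl
          · rw [hM0, insRel_ne ha hb] at hall0
            exact hABne (antisymm_of (reorder L0 W) hall0 hcl)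
          · rw [hM1, insRel_ne ha hb] at hall1
            exact hABne (antisymm_of (reorder L0 V) hall1 hcl)
        · have := hallD i hi0
          rw [hMD] at this
          rw [insRel_ne ha hb] at this
          exact hABne (antisymm_of (L i) this hiBA)

end Step

/-- For any finite poset `P` with at least 2 elements and any `x ∈ P`,
`dim P ≤ 1 + dim (P − {x})`. -/
theorem stmt_7 (α : Type*) [PartialOrder α] [Fintype α]
    (hcard : 2 ≤ Fintype.card α) (x : α) :
    dimP α ≤ 1 + dimP ↥({x}ᶜ : Set α) := by
  classical
  have hne : ∃ d, d ∈ {d | 0 < d ∧ RealizerOfSize ↥({x}ᶜ : Set α) d} :=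
    exists_realizer ↥({x}ᶜ : Set α)
  have hmem : dimP ↥({x}ᶜ : Set α) ∈ {d | 0 < d ∧ RealizerOfSize ↥({x}ᶜ : Set α) d} :=
    Nat.sInf_mem hne
  obtain ⟨hpos, hreal⟩ := hmem
  have hstep := realizer_step x hpos hreal
  exact Nat.sInf_le ⟨by omega, hstep⟩
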